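/- Let f : ℝⁿ → ℝ be L-smooth (gradient L-Lipschitz) and suppose f satisfies gradient dominance: there is λ > 0 with f(x) − f* ≤ (1/λ)‖∇f(x)‖² for all x, where f* = inf f. Then for gradient descent x' = x − η g with step size η ≤ 1/(4L), where g is any vector, f(x') − f* ≤ (1 − ηλ/4)(f(x) − f*) + (3η/4)‖g − ∇f(x)‖². -/

import Mathlib

open intervalIntegral in
lemma descent_lemma {n : ℕ} (f : EuclideanSpace ℝ (Fin n) → ℝ) (L : ℝ) (hL : 0 ≤ L)
    (hdiff : Differentiable ℝ f)
    (hsmooth : ∀ x y, ‖gradient f x - gradient f y‖ ≤ L * ‖x - y‖)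
    (x v : EuclideanSpace ℝ (Fin n)) :
    f (x + v) ≤ f x + inner ℝ (gradient f x) v + L / 2 * ‖v‖ ^ 2 := by
  have hgc : Continuous (gradient f) := by
    refine (LipschitzWith.of_dist_le_mul (K := L.toNNReal) ?_).continuous
    intro a b
    simpa [dist_eq_norm, Real.coe_toNNReal L hL] using hsmooth a b
  set φ' : ℝ → ℝ := fun t => inner ℝ (gradient f (x + t • v)) v with hφ'
  have hderiv : ∀ t : ℝ, HasDerivAt (fun t : ℝ => f (x + t • v)) (φ' t) t := by
    intro t
    have h1 : HasDerivAt (fun t : ℝ => x + t • v) v t := by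
      simpa using ((hasDerivAt_id t).smul_const v).const_add x
    have h2 := (hdiff (x + t • v)).hasGradientAt.hasFDerivAt
    exact h2.comp_hasDerivAt t h1
  have hcont : Continuous φ' := by
    apply Continuous.inner (hgc.comp (by continuity)) continuous_const
  have hint : f (x + v) - f x = ∫ t in (0:ℝ)..1, φ' t := by
    have := intervalIntegral.integral_eq_sub_of_hasDerivAt
      (f := fun t : ℝ => f (x + t • v)) (f' := φ')
      (fun t _ => hderiv t) (hcont.intervalIntegrable 0 1)
    simp at this
    linarith
  set c : ℝ := inner ℝ (gradient f x) v with hc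
  have hbound : (∫ t in (0:ℝ)..1, φ' t) ≤ ∫ t in (0:ℝ)..1,
      (c + L * t * ‖v‖ ^ 2) := by
    apply intervalIntegral.integral_mono_on (by norm_num)
      (hcont.intervalIntegrable 0 1)
      ((by continuity : Continuous fun t : ℝ => c + L * t * ‖v‖ ^ 2).intervalIntegrable 0 1)
    intro t ht
    rcases ht with ⟨ht0, ht1⟩
    have h1 : φ' t - c = inner ℝ (gradient f (x + t • v) - gradient f x) v := by
      simp [hφ', hc, inner_sub_left]
    have h2 : (inner ℝ (gradient f (x + t • v) - gradient f x) v : ℝ)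
        ≤ ‖gradient f (x + t • v) - gradient f x‖ * ‖v‖ :=
      real_inner_le_norm _ _
    have h3 : ‖gradient f (x + t • v) - gradient f x‖ ≤ L * (t * ‖v‖) := by
      have := hsmooth (x + t • v) x
      simpa [norm_smul, abs_of_nonneg ht0] using this
    nlinarith [norm_nonneg v, norm_nonneg (gradient f (x + t • v) - gradient f x)]
  have hval : (∫ t in (0:ℝ)..1, (c + L * t * ‖v‖ ^ 2)) = c + L / 2 * ‖v‖ ^ 2 := by
    have heq : (fun t : ℝ => c + L * t * ‖v‖ ^ 2)
        = fun t : ℝ => c + (L * ‖v‖ ^ 2) * t := by ext t; ring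
    rw [heq, intervalIntegral.integral_add intervalIntegrable_const
      ((continuous_const.mul continuous_id').intervalIntegrable (u := fun t : ℝ => L * ‖v‖ ^ 2 * t) 0 1)]
    rw [intervalIntegral.integral_const_mul, integral_id]
    simp
    ring
  linarith [hint ▸ hbound.trans_eq hval]

lemma arith_step (η L lam D D' A E G I : ℝ) (hη : 0 < η) (hηL : η * L ≤ 1 / 4)
    (hlam : 0 < lam) (hae : -(A * E) ≤ I) (h6 : G ^ 2 ≤ (A + E) ^ 2)
    (hpl : lam * D ≤ A ^ 2) (hA0 : 0 ≤ A) (hE0 : 0 ≤ E) (hG0 : 0 ≤ G)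
    (hfx : D' ≤ D + -η * (A ^ 2 + I) + L / 2 * (η ^ 2 * G ^ 2)) :
    D' ≤ (1 - η * lam / 4) * D + (3 * η / 4) * E ^ 2 := by
  have e1 : -(η * (A * E)) ≤ η * I := by nlinarith [hη.le]
  have e2 : η * (A * E) ≤ η * ((A ^ 2 + E ^ 2) / 2) := by
    nlinarith [sq_nonneg (A - E), hη.le]
  have h5 : L / 2 * (η ^ 2 * G ^ 2) ≤ η / 8 * G ^ 2 := by
    nlinarith [mul_le_mul_of_nonneg_right hηL (mul_nonneg hη.le (sq_nonneg G))]
  have h7 : η / 8 * G ^ 2 ≤ η / 8 * (A + E) ^ 2 :=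
    mul_le_mul_of_nonneg_left h6 (by positivity)
  have h8 : η / 8 * (A + E) ^ 2 ≤ η / 4 * (A ^ 2 + E ^ 2) := by
    nlinarith [sq_nonneg (A - E), hη.le]
  have h4 : (η / 4) * (lam * D) ≤ (η / 4) * A ^ 2 :=
    mul_le_mul_of_nonneg_left hpl (by positivity)
  nlinarith [hη.le]

/-- One-step inexact gradient descent recursion under L-smoothness and gradient
dominance (PL inequality). -/
theorem inexact_gd_step_pl {n : ℕ} (f : EuclideanSpace ℝ (Fin n) → ℝ)
    (L lam η : ℝ) (hL : 0 < L) (hlam : 0 < lam)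
    (hdiff : Differentiable ℝ f)
    (hsmooth : ∀ x y, ‖gradient f x - gradient f y‖ ≤ L * ‖x - y‖)
    (fstar : ℝ) (hfstar : fstar = sInf (Set.range f))
    (hdom : ∀ x, f x - fstar ≤ (1 / lam) * ‖gradient f x‖ ^ 2)
    (hη : 0 < η) (hη' : η ≤ 1 / (4 * L))
    (x g : EuclideanSpace ℝ (Fin n)) :
    f (x - η • g) - fstar
      ≤ (1 - η * lam / 4) * (f x - fstar) + (3 * η / 4) * ‖g - gradient f x‖ ^ 2 := by
  have hd := descent_lemma f L hL.le hdiff hsmooth x (-(η • g))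
  rw [← sub_eq_add_neg] at hd
  set a := gradient f x with ha
  set e := g - a with he
  have hg : g = a + e := by simp [he]
  have hinner : (inner ℝ a (-(η • g)) : ℝ) = -η * (‖a‖ ^ 2 + inner ℝ a e) := by
    rw [hg, inner_neg_right, inner_smul_right, inner_add_right, real_inner_self_eq_norm_sq]
    ring
  have hnormv : ‖-(η • g)‖ ^ 2 = η ^ 2 * ‖g‖ ^ 2 := by
    rw [norm_neg, norm_smul]; simp [abs_of_nonneg hη.le]; ring
  rw [hinner, hnormv] at hd
  have hae : -(‖a‖ * ‖e‖) ≤ (inner ℝ a e : ℝ) :=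
    neg_le_of_abs_le (abs_real_inner_le_norm a e)
  have h6 : ‖g‖ ^ 2 ≤ (‖a‖ + ‖e‖) ^ 2 := by
    apply pow_le_pow_left₀ (norm_nonneg g) _ 2
    rw [hg]; exact norm_add_le a e
  have hηL : η * L ≤ 1 / 4 := by
    rw [le_div_iff₀ (by positivity)] at hη'
    nlinarith
  have hpl : lam * (f x - fstar) ≤ ‖a‖ ^ 2 := by
    have := hdom x
    rw [div_mul_eq_mul_div, le_div_iff₀ hlam] at this
    linarith
  have hfx : f (x - η • g) - fstar ≤ (f x - fstar)
      + -η * (‖a‖ ^ 2 + inner ℝ a e) + L / 2 * (η ^ 2 * ‖g‖ ^ 2) := by linarith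
  exact arith_step η L lam (f x - fstar) (f (x - η • g) - fstar) ‖a‖ ‖e‖ ‖g‖
    (inner ℝ a e) hη hηL hlam hae h6 hpl (norm_nonneg a) (norm_nonneg e) (norm_nonneg g) hfx
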